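/- The real number ∑_{n=1}^∞ λ(n) 2^{-n} is irrational, where λ is the Liouville function. -/

import Mathlib

open ArithmeticFunction
open scoped ArithmeticFunction.Omega

private def lam (n : ℕ) : ℤ := (-1) ^ (Ω n)

private lemma lam_sq (n : ℕ) : lam n = 1 ∨ lam n = -1 := by
  unfold lam
  rcases Nat.even_or_odd (Ω n) with h | h
  · left; exact Even.neg_one_pow h
  · right; exact Odd.neg_one_pow h

private lemma lam_ne_zero (n : ℕ) : lam n ≠ 0 := by
  rcases lam_sq n with h | h <;> simp [h]

private lemma lam_two_mul {m : ℕ} (hm : m ≠ 0) : lam (2 * m) = - lam m := by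
  unfold lam
  rw [cardFactors_mul two_ne_zero hm, cardFactors_apply_prime Nat.prime_two]
  ring

private lemma no_periodic (p N : ℕ) (hp : 0 < p)
    (h : ∀ n, N ≤ n → lam (n + p) = lam n) : False := by
  set M := max N 1 with hM
  have hM1 : 1 ≤ M := le_max_right _ _
  have hNM : N ≤ M := le_max_left _ _
  have key : ∀ k, lam (p * M + k * p) = lam (p * M) := by
    intro k
    induction k with
    | zero => simp
    | succ k ih =>
      have hle : N ≤ p * M + k * p := by nlinarith
      have harg : p * M + (k + 1) * p = (p * M + k * p) + p := by ring
      rw [harg, h _ hle, ih]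
  have h2 : lam (2 * (p * M)) = lam (p * M) := by
    have harg : 2 * (p * M) = p * M + M * p := by ring
    rw [harg, key M]
  rw [lam_two_mul (by positivity)] at h2
  have := lam_ne_zero (p * M)
  omega

private noncomputable def tl (k : ℕ) : ℝ := ∑' n : ℕ, (lam (n + k + 1) : ℝ) / 2 ^ (n + 1)

private lemma abs_lam (n : ℕ) : |(lam n : ℝ)| = 1 := by
  rcases lam_sq n with h | h <;> simp [h]

private lemma summable_tl (k : ℕ) :
    Summable (fun n : ℕ => (lam (n + k + 1) : ℝ) / 2 ^ (n + 1)) := by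
  apply Summable.of_norm
  have h : ∀ n : ℕ, ‖(lam (n + k + 1) : ℝ) / 2 ^ (n + 1)‖ = (1:ℝ) / 2 / 2 ^ n := by
    intro n
    rw [norm_div, Real.norm_eq_abs, Real.norm_eq_abs, abs_lam, abs_pow, abs_two,
      pow_succ]
    ring
  simpa [h] using summable_geometric_two' 1

private lemma tl_rec (k : ℕ) : tl k = (lam (k + 1) : ℝ) / 2 + tl (k + 1) / 2 := by
  unfold tl
  rw [Summable.tsum_eq_zero_add (summable_tl k)]
  congr 1
  · norm_num
  · rw [← tsum_div_const]
    apply tsum_congr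
    intro n
    have : n + 1 + k + 1 = n + (k + 1) + 1 := by ring
    rw [this, pow_succ]
    ring

private lemma tl_abs_le (k : ℕ) : |tl k| ≤ 1 := by
  have h := norm_tsum_le_tsum_norm (f := fun n : ℕ => (lam (n + k + 1) : ℝ) / 2 ^ (n + 1))
    (summable_tl k).norm
  have h2 : ∀ n : ℕ, ‖(lam (n + k + 1) : ℝ) / 2 ^ (n + 1)‖ = (1:ℝ) / 2 / 2 ^ n := by
    intro n
    rw [norm_div, Real.norm_eq_abs, Real.norm_eq_abs, abs_lam, abs_pow, abs_two, pow_succ]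
    ring
  simp only [h2] at h
  rw [tsum_geometric_two' 1] at h
  simpa [tl, Real.norm_eq_abs] using h

private lemma tl_extreme (k : ℕ) (e : ℤ) (he : e = 1 ∨ e = -1) (h : tl k = (e : ℝ)) :
    ∀ n : ℕ, lam (n + k + 1) = e := by
  have hee : (e : ℝ) * e = 1 := by rcases he with h' | h' <;> simp [h']
  set f : ℕ → ℝ := fun n => (1 - (e : ℝ) * lam (n + k + 1)) / 2 ^ (n + 1) with hf
  have hnonneg : ∀ n, 0 ≤ f n := by
    intro n
    apply div_nonneg _ (by positivity)
    have : (e : ℝ) * lam (n + k + 1) ≤ 1 := by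
      calc (e : ℝ) * lam (n + k + 1) ≤ |(e : ℝ) * lam (n + k + 1)| := le_abs_self _
        _ = 1 := by rw [abs_mul, abs_lam]; rcases he with h' | h' <;> simp [h']
    linarith
  have hs1 : Summable (fun n : ℕ => (1:ℝ) / 2 / 2 ^ n) := summable_geometric_two' 1
  have hs1' : Summable (fun n : ℕ => (1:ℝ) / 2 ^ (n + 1)) := by
    have : ∀ n : ℕ, (1:ℝ) / 2 ^ (n + 1) = 1 / 2 / 2 ^ n := by
      intro n; rw [pow_succ]; ring
    simpa [this] using hs1
  have hs2 : Summable (fun n : ℕ => (e : ℝ) * ((lam (n + k + 1) : ℝ) / 2 ^ (n + 1))) :=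
    (summable_tl k).mul_left _
  have hsf : Summable f := by
    have : ∀ n, f n = 1 / 2 ^ (n + 1) - (e : ℝ) * ((lam (n + k + 1) : ℝ) / 2 ^ (n + 1)) := by
      intro n; rw [hf]; ring
    exact (hs1'.sub hs2).congr (fun n => (this n).symm)
  have hsum : ∑' n, f n = 0 := by
    have heq : ∀ n, f n = 1 / 2 ^ (n + 1) - (e : ℝ) * ((lam (n + k + 1) : ℝ) / 2 ^ (n + 1)) := by
      intro n; rw [hf]; ring
    calc ∑' n, f n
        = ∑' n, ((1:ℝ) / 2 ^ (n + 1) - (e : ℝ) * ((lam (n + k + 1) : ℝ) / 2 ^ (n + 1))) :=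
          tsum_congr heq
      _ = (∑' n, (1:ℝ) / 2 ^ (n + 1)) - ∑' n, (e : ℝ) * ((lam (n + k + 1) : ℝ) / 2 ^ (n + 1)) :=
          Summable.tsum_sub hs1' hs2
      _ = 1 - (e : ℝ) * tl k := by
          rw [tsum_mul_left]
          congr 1
          have : ∀ n : ℕ, (1:ℝ) / 2 ^ (n + 1) = 1 / 2 / 2 ^ n := by
            intro n; rw [pow_succ]; ring
          simp only [this]
          exact tsum_geometric_two' 1
      _ = 0 := by rw [h, hee]; ring
  intro n
  have hle : f n ≤ 0 := hsum ▸ Summable.le_tsum hsf n (fun i _ => hnonneg i)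
  have h0 : f n = 0 := le_antisymm hle (hnonneg n)
  have : (e : ℝ) * lam (n + k + 1) = 1 := by
    have h2 : (0:ℝ) < 2 ^ (n + 1) := by positivity
    rw [hf] at h0
    field_simp at h0
    linarith
  have : (lam (n + k + 1) : ℝ) = e := by
    calc (lam (n + k + 1) : ℝ) = (e : ℝ) * e * lam (n + k + 1) := by rw [hee]; ring
      _ = (e : ℝ) * ((e : ℝ) * lam (n + k + 1)) := by ring
      _ = e := by rw [this]; ring
  exact_mod_cast this

private lemma lam_eq_of_tl_eq (hA : ∀ N : ℕ, ∀ e : ℤ, ∃ n, N ≤ n ∧ lam n ≠ e)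
    (m m' : ℕ) (h : tl m = tl m') : lam (m + 1) = lam (m' + 1) := by
  have key : ∀ a b : ℕ, lam (a + 1) = 1 → lam (b + 1) = -1 → tl a = tl b → False := by
    intro a b ha hb hab
    have hra := tl_rec a
    have hrb := tl_rec b
    rw [ha] at hra
    rw [hb] at hrb
    push_cast at hra hrb
    have h1 : -1 ≤ tl (a + 1) := (abs_le.mp (tl_abs_le (a + 1))).1
    have h2 : tl (b + 1) ≤ 1 := (abs_le.mp (tl_abs_le (b + 1))).2
    have hta : tl (a + 1) = -1 := by linarith
    have hall := tl_extreme (a + 1) (-1) (Or.inr rfl) (by rw [hta]; norm_num)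
    obtain ⟨n, hn, hne⟩ := hA (a + 2) (-1)
    exact hne (by have := hall (n - (a + 2)); rwa [show n - (a+2) + (a+1) + 1 = n by omega] at this)
  rcases lam_sq (m + 1) with h1 | h1 <;> rcases lam_sq (m' + 1) with h2 | h2
  · rw [h1, h2]
  · exact (key m m' h1 h2 h).elim
  · exact (key m' m h2 h1 h.symm).elim
  · rw [h1, h2]

theorem stmt_4 :
    Irrational (∑' n : ℕ,
      ((-1 : ℝ) ^ (ArithmeticFunction.cardFactors (n + 1))) / 2 ^ (n + 1)) := by
  have hx : (∑' n : ℕ,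
      ((-1 : ℝ) ^ (ArithmeticFunction.cardFactors (n + 1))) / 2 ^ (n + 1)) = tl 0 := by
    unfold tl
    apply tsum_congr
    intro n
    simp [lam]
  rw [hx]
  rintro ⟨q, hq⟩
  -- non (eventually constant)
  have hA : ∀ N : ℕ, ∀ e : ℤ, ∃ n, N ≤ n ∧ lam n ≠ e := by
    intro N e
    by_contra hc
    push_neg at hc
    exact no_periodic 1 N one_pos (fun n hn => by rw [hc _ (by omega), hc _ hn])
  -- integer structure
  have hden : (0:ℝ) < (q.den : ℝ) := by exact_mod_cast q.pos
  have hint : ∀ k, ∃ c : ℤ, tl k = (c : ℝ) / (q.den : ℝ) := by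
    intro k
    induction k with
    | zero =>
      exact ⟨q.num, by rw [← hq, Rat.cast_def]⟩
    | succ k ih =>
      obtain ⟨c, hc⟩ := ih
      refine ⟨2 * c - lam (k + 1) * q.den, ?_⟩
      have := tl_rec k
      rw [hc] at this
      push_cast
      field_simp at this ⊢
      linarith
  choose c hc using hint
  have hmem : ∀ k, c k ∈ Set.Icc (-(q.den : ℤ)) (q.den : ℤ) := by
    intro k
    have h1 := tl_abs_le k
    rw [hc k, abs_div, abs_of_pos hden] at h1
    rw [div_le_one hden] at h1
    have h2 : |(c k : ℝ)| ≤ (q.den : ℝ) := h1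
    have h3 : |c k| ≤ (q.den : ℤ) := by exact_mod_cast (by rwa [← Int.cast_abs] at h2 : ((|c k| : ℤ) : ℝ) ≤ ((q.den : ℤ) : ℝ))
    constructor <;> [linarith [neg_abs_le (c k)]; linarith [le_abs_self (c k)]]
  obtain ⟨k, -, j, -, hkj, hfeq⟩ :=
    Set.infinite_univ.exists_ne_map_eq_of_mapsTo
      (fun k _ => hmem k) (Set.finite_Icc _ _)
  wlog hlt : k < j generalizing k j
  · exact this j k hkj.symm hfeq.symm (by omega)
  have htkj : tl k = tl j := by rw [hc k, hc j, hfeq]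
  have hiter : ∀ i, tl (k + i) = tl (j + i) := by
    intro i
    induction i with
    | zero => simpa using htkj
    | succ i ih =>
      have hl := lam_eq_of_tl_eq hA (k + i) (j + i) ih
      have h1 := tl_rec (k + i)
      have h2 := tl_rec (j + i)
      rw [hl] at h1
      have hgoal : tl (k + i + 1) = tl (j + i + 1) := by linarith
      rw [show k + (i + 1) = k + i + 1 from rfl, show j + (i + 1) = j + i + 1 from rfl]
      exact hgoal
  have hper : ∀ n, k + 1 ≤ n → lam (n + (j - k)) = lam n := by
    intro n hn
    have hl := lam_eq_of_tl_eq hA (j + (n - (k + 1))) (k + (n - (k + 1))) (hiter (n - (k + 1))).symm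
    rw [show k + (n - (k + 1)) + 1 = n by omega, show j + (n - (k + 1)) + 1 = n + (j - k) by omega] at hl
    exact hl
  exact no_periodic (j - k) (k + 1) (by omega) hper
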